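/- Let c > 0 and let b_t = c/√t for each positive integer t. Then for every positive integer n, ∑_{t=1}^{n} α^t_n · b_t ≤ 2·b_n = 2c/√n. -/

import Mathlib

/-- Learning rate `α_t = (H+1)/(H+t)`. -/
noncomputable def lr (H t : ℕ) : ℝ := (H + 1) / (H + t)

/-- The coefficient `α^i_t`: for `i = 0` it is `∏_{j=1}^t (1 - α_j)`, and for
`i ≥ 1` it is `α_i · ∏_{j=i+1}^t (1 - α_j)`. -/
noncomputable def alphaC (H i t : ℕ) : ℝ :=
  if i = 0 then ∏ j ∈ Finset.Icc 1 t, (1 - lr H j)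
  else lr H i * ∏ j ∈ Finset.Icc (i + 1) t, (1 - lr H j)

lemma lr_nonneg (H t : ℕ) : 0 ≤ lr H t := by
  unfold lr
  positivity

lemma lr_le_one (H t : ℕ) (ht : 1 ≤ t) : lr H t ≤ 1 := by
  unfold lr
  have hden : (0:ℝ) < (H:ℝ) + t := by
    have : (1:ℝ) ≤ (t:ℝ) := by exact_mod_cast ht
    positivity
  rw [div_le_one hden]
  have : (1:ℝ) ≤ (t:ℝ) := by exact_mod_cast ht
  linarith

lemma alphaC_rec (H t n : ℕ) (ht : 1 ≤ t) (htn : t ≤ n) :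
    alphaC H t (n + 1) = (1 - lr H (n + 1)) * alphaC H t n := by
  unfold alphaC
  rw [if_neg (by omega), if_neg (by omega),
    Finset.prod_Icc_succ_top (by omega : t + 1 ≤ n + 1)]
  ring

lemma alphaC_self (H n : ℕ) (hn : 1 ≤ n) : alphaC H n n = lr H n := by
  unfold alphaC
  rw [if_neg (by omega), Finset.Icc_eq_empty (by omega), Finset.prod_empty, mul_one]

lemma key (H : ℕ) (hH : 1 ≤ H) (c : ℝ) (hc : 0 < c) :
    ∀ n, 1 ≤ n →
      ∑ t ∈ Finset.Icc 1 n, alphaC H t n * (c / Real.sqrt t) ≤ 2 * (c / Real.sqrt n) := by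
  intro n
  induction n with
  | zero => omega
  | succ n ih =>
    intro _
    rcases Nat.eq_zero_or_pos n with h0 | hpos
    · subst h0
      rw [show Finset.Icc 1 1 = {1} from Finset.Icc_self 1, Finset.sum_singleton,
        alphaC_self H 1 le_rfl]
      have hlr : lr H 1 = 1 := by
        unfold lr
        rw [Nat.cast_one, div_self (by positivity)]
      norm_num [hlr]
      linarith
    · -- inductive step
      have IH := ih hpos
      have hn1 : (0:ℝ) < (n:ℝ) := by exact_mod_cast hpos
      have hs : (0:ℝ) < Real.sqrt n := Real.sqrt_pos.mpr hn1
      have hu : (0:ℝ) < Real.sqrt (n + 1 : ℕ) := Real.sqrt_pos.mpr (by push_cast; linarith)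
      set s := Real.sqrt n with hsdef
      set u := Real.sqrt (n + 1 : ℕ) with hudef
      have hs2 : s ^ 2 = n := Real.sq_sqrt hn1.le
      have hu2 : u ^ 2 = (n:ℝ) + 1 := by
        rw [hudef]
        push_cast
        exact Real.sq_sqrt (by linarith)
      rw [Finset.sum_Icc_succ_top (by omega : 1 ≤ n + 1)]
      have hre : ∑ t ∈ Finset.Icc 1 n, alphaC H t (n + 1) * (c / Real.sqrt t)
          = (1 - lr H (n + 1)) * ∑ t ∈ Finset.Icc 1 n, alphaC H t n * (c / Real.sqrt t) := by
        rw [Finset.mul_sum]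
        refine Finset.sum_congr rfl ?_
        intro t htmem
        obtain ⟨h1, h2⟩ := Finset.mem_Icc.mp htmem
        rw [alphaC_rec H t n h1 h2]
        ring
      rw [hre, alphaC_self H (n + 1) (by omega)]
      have hA0 : 0 ≤ lr H (n + 1) := lr_nonneg _ _
      have hA1 : lr H (n + 1) ≤ 1 := lr_le_one _ _ (by omega)
      have step1 : (1 - lr H (n + 1)) * ∑ t ∈ Finset.Icc 1 n, alphaC H t n * (c / Real.sqrt t)
          ≤ (1 - lr H (n + 1)) * (2 * (c / s)) :=
        mul_le_mul_of_nonneg_left IH (by linarith)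
      have hlrval : lr H (n + 1) = ((H:ℝ) + 1) / ((H:ℝ) + (n:ℝ) + 1) := by
        unfold lr
        push_cast
        ring_nf
      have hD : (0:ℝ) < (H:ℝ) + (n:ℝ) + 1 := by positivity
      have h2su : 2 * s * u ≤ 2 * (n:ℝ) + 1 := by
        nlinarith [sq_nonneg (s - u), hs2, hu2]
      have final : (1 - lr H (n + 1)) * (2 * (c / s)) + lr H (n + 1) * (c / u)
          ≤ 2 * (c / u) := by
        have h1 : 1 - ((H:ℝ) + 1) / ((H:ℝ) + (n:ℝ) + 1) = (n:ℝ) / ((H:ℝ) + (n:ℝ) + 1) := by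
          field_simp
          ring
        have hHn : (1:ℝ) ≤ (H:ℝ) := by exact_mod_cast hH
        rw [hlrval, h1, ← sub_nonneg]
        have expand : 2 * (c / u) - ((n:ℝ) / ((H:ℝ) + (n:ℝ) + 1) * (2 * (c / s)) +
            ((H:ℝ) + 1) / ((H:ℝ) + (n:ℝ) + 1) * (c / u))
            = (2 * ((H:ℝ) + (n:ℝ) + 1) * c * s - (2 * (n:ℝ) * c * u + ((H:ℝ) + 1) * c * s))
              / (((H:ℝ) + (n:ℝ) + 1) * s * u) := by
          field_simp
        rw [expand]
        apply div_nonneg _ (by positivity)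
        have h3 : 2 * (n:ℝ) * c * u = c * s * (2 * s * u) := by
          rw [← hs2]; ring
        nlinarith [mul_le_mul_of_nonneg_left h2su (mul_pos hc hs).le, h3,
          mul_nonneg (mul_pos hc hs).le (by linarith : (0:ℝ) ≤ (H:ℝ))]
      linarith [step1, final]

theorem stmt_11 (H : ℕ) (hH : 1 ≤ H) (c : ℝ) (hc : 0 < c)
    (b : ℕ → ℝ) (hb : ∀ t : ℕ, 1 ≤ t → b t = c / Real.sqrt t)
    (n : ℕ) (hn : 1 ≤ n) :
    ∑ t ∈ Finset.Icc 1 n, alphaC H t n * b t ≤ 2 * (c / Real.sqrt n) := by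
  have := key H hH c hc n hn
  calc ∑ t ∈ Finset.Icc 1 n, alphaC H t n * b t
      = ∑ t ∈ Finset.Icc 1 n, alphaC H t n * (c / Real.sqrt t) := by
        refine Finset.sum_congr rfl ?_
        intro t ht
        rw [hb t (Finset.mem_Icc.mp ht).1]
    _ ≤ 2 * (c / Real.sqrt n) := this
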